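/- A pseudo-Dedekind domain D is sharp if and only if for all nonzero ideals I, A, B of D with I ⊇ A·B and I_v = D, there exist ideals A' ⊇ A and B' ⊇ B such that I = A'·B'. -/

import Mathlib

/-- A domain `R` is *sharp* if whenever `I ⊇ A*B` with `I, A, B` nonzero ideals,
there exist ideals `A' ⊇ A` and `B' ⊇ B` such that `I = A'*B'`. -/
def IsSharpDomain (R : Type*) [CommRing R] : Prop :=
  ∀ I A B : Ideal R, I ≠ ⊥ → A ≠ ⊥ → B ≠ ⊥ → A * B ≤ I →
    ∃ A' B' : Ideal R, A ≤ A' ∧ B ≤ B' ∧ I = A' * B'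

/-- A domain is *pseudo-Dedekind* if the `v`-closure `(I⁻¹)⁻¹` of every nonzero
ideal `I` is invertible (as a fractional ideal). -/
def IsPseudoDedekind (R : Type*) [CommRing R] [IsDomain R] : Prop :=
  ∀ I : Ideal R, I ≠ ⊥ →
    IsUnit (((I : FractionalIdeal (nonZeroDivisors R) (FractionRing R))⁻¹)⁻¹)


open FractionalIdeal

section Helpers
variable {R : Type*} [CommRing R] [IsDomain R]

local notation "F" => FractionalIdeal (nonZeroDivisors R) (FractionRing R)

lemma myInv_ne_zero {X : F} (hX : X ≠ 0) : X⁻¹ ≠ 0 := by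
  intro h
  have hm : (algebraMap R (FractionRing R)) (X.den : R) ∈ X⁻¹ :=
    den_mem_inv (by simpa using hX)
  rw [h, mem_zero_iff] at hm
  exact nonZeroDivisors.coe_ne_zero X.den
    ((IsFractionRing.injective R (FractionRing R)) (by rw [hm, _root_.map_zero]))

lemma my_mul_inv_le_one {X : F} (hX : X ≠ 0) : X * X⁻¹ ≤ 1 := by
  rw [mul_comm, inv_eq]
  exact (le_div_iff_mul_le hX).mp le_rfl

lemma my_le_vv {X : F} (hX : X ≠ 0) : X ≤ (X⁻¹)⁻¹ := by
  rw [inv_eq (I := X⁻¹)]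
  exact (le_div_iff_mul_le (myInv_ne_zero hX)).mpr (my_mul_inv_le_one hX)

lemma my_vv_mono {X Y : F} (hX : X ≠ 0) (hXY : X ≤ Y) : (X⁻¹)⁻¹ ≤ (Y⁻¹)⁻¹ := by
  have hY : Y ≠ 0 := fun h => hX (le_antisymm (h ▸ hXY) (zero_le X))
  exact inv_anti_mono (myInv_ne_zero hY) (myInv_ne_zero hX) (inv_anti_mono hX hY hXY)

lemma my_unit_mul_inv {u : F} (hu : IsUnit u) : u * u⁻¹ = 1 :=
  (mul_inv_cancel_iff_isUnit _).mpr hu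

lemma my_unit_inv_unit {u : F} (hu : IsUnit u) : IsUnit u⁻¹ :=
  IsUnit.of_mul_eq_one _ (by rw [mul_comm]; exact my_unit_mul_inv hu)

lemma my_unit_vv {u : F} (hu : IsUnit u) : (u⁻¹)⁻¹ = u :=
  (right_inverse_eq _ _ _ (by rw [mul_comm]; exact my_unit_mul_inv hu)).symm

lemma my_unit_ne_zero {u : F} (hu : IsUnit u) : u ≠ 0 := by
  intro h
  have h1 : (1 : F) = 0 := by rw [← my_unit_mul_inv hu, h, zero_mul]
  have : (1 : FractionRing R) ∈ (0 : F) := h1 ▸ one_mem_one _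
  rw [mem_zero_iff] at this
  exact one_ne_zero this

lemma my_le_unit_mul_iff {u X Y : F} (hu : IsUnit u) : X ≤ u * Y ↔ u⁻¹ * X ≤ Y := by
  constructor
  · intro h
    calc u⁻¹ * X ≤ u⁻¹ * (u * Y) := mul_right_mono h
    _ = (u * u⁻¹) * Y := by ring
    _ = Y := by rw [my_unit_mul_inv hu, one_mul]
  · intro h
    calc X = (u * u⁻¹) * X := by rw [my_unit_mul_inv hu, one_mul]
    _ = u * (u⁻¹ * X) := by ring
    _ ≤ u * Y := mul_right_mono h

lemma my_inv_mul_unit {X u : F} (hX : X ≠ 0) (hu : IsUnit u) :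
    (X * u)⁻¹ = X⁻¹ * u⁻¹ := by
  have hXu : X * u ≠ 0 := fun h => hX <| by
    have := congrArg (· * u⁻¹) h
    simpa [mul_assoc, my_unit_mul_inv hu] using this
  apply le_antisymm
  · have h1 : ((X * u)⁻¹ * u) * X ≤ 1 := by
      calc ((X * u)⁻¹ * u) * X = (X * u) * (X * u)⁻¹ := by ring
      _ ≤ 1 := my_mul_inv_le_one hXu
    have h3 : (X * u)⁻¹ * u ≤ X⁻¹ := by
      rw [inv_eq (I := X)]
      exact (le_div_iff_mul_le hX).mpr h1
    calc (X * u)⁻¹ = ((X * u)⁻¹ * u) * u⁻¹ := by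
          rw [mul_assoc, my_unit_mul_inv hu, mul_one]
    _ ≤ X⁻¹ * u⁻¹ := mul_left_mono h3
  · rw [inv_eq (I := X * u)]
    apply (le_div_iff_mul_le hXu).mpr
    calc (X⁻¹ * u⁻¹) * (X * u) = (X * X⁻¹) * (u * u⁻¹) := by ring
    _ = (X * X⁻¹) * 1 := by rw [my_unit_mul_inv hu]
    _ ≤ 1 := by rw [mul_one]; exact my_mul_inv_le_one hX

lemma my_vv_mul_unit {X u : F} (hX : X ≠ 0) (hu : IsUnit u) :
    ((X * u)⁻¹)⁻¹ = (X⁻¹)⁻¹ * u := by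
  rw [my_inv_mul_unit hX hu,
    my_inv_mul_unit (myInv_ne_zero hX) (my_unit_inv_unit hu), my_unit_vv hu]

lemma my_inv_vv {X : F} (hX : X ≠ 0) : ((X⁻¹)⁻¹)⁻¹ = X⁻¹ :=
  le_antisymm (inv_anti_mono hX (myInv_ne_zero (myInv_ne_zero hX))
    (my_le_vv hX)) (my_le_vv (myInv_ne_zero hX))

end Helpers

section Main
variable {R : Type*} [CommRing R] [IsDomain R]

local notation "F" => FractionalIdeal (nonZeroDivisors R) (FractionRing R)

lemma my_mul_unit_ne_zero {X u : F} (hX : X ≠ 0) (hu : IsUnit u) : X * u ≠ 0 :=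
  fun h => hX <| by
    have := congrArg (· * u⁻¹) h
    simpa [mul_assoc, my_unit_mul_inv hu] using this

theorem pseudoDedekind_sharp_iff' (hPD : IsPseudoDedekind R) :
    IsSharpDomain R ↔
      ∀ I A B : Ideal R, I ≠ ⊥ → A ≠ ⊥ → B ≠ ⊥ → A * B ≤ I →
        ((I : FractionalIdeal (nonZeroDivisors R) (FractionRing R))⁻¹)⁻¹ = 1 →
        ∃ A' B' : Ideal R, A ≤ A' ∧ B ≤ B' ∧ I = A' * B' := by
  constructor
  · exact fun hs I A B h1 h2 h3 h4 _ => hs I A B h1 h2 h3 h4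
  intro h I A B hI hA hB hAB
  have hI0 : (I : F) ≠ 0 := by rwa [ne_eq, coeIdeal_eq_zero]
  have hA0 : (A : F) ≠ 0 := by rwa [ne_eq, coeIdeal_eq_zero]
  have hB0 : (B : F) ≠ 0 := by rwa [ne_eq, coeIdeal_eq_zero]
  set Iv : F := ((I : F)⁻¹)⁻¹ with hIvdef
  set Av : F := ((A : F)⁻¹)⁻¹ with hAvdef
  set Bv : F := ((B : F)⁻¹)⁻¹ with hBvdef
  have uI : IsUnit Iv := hPD I hI
  have uA : IsUnit Av := hPD A hA
  have uB : IsUnit Bv := hPD B hB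
  have hone : ((1 : F)⁻¹)⁻¹ = 1 := my_unit_vv isUnit_one
  have hIvle1 : Iv ≤ 1 := le_of_le_of_eq (my_vv_mono hI0 coeIdeal_le_one) hone
  have hAvle1 : Av ≤ 1 := le_of_le_of_eq (my_vv_mono hA0 coeIdeal_le_one) hone
  have hBvle1 : Bv ≤ 1 := le_of_le_of_eq (my_vv_mono hB0 coeIdeal_le_one) hone
  have hIle : (I : F) ≤ Iv := my_le_vv hI0
  have hAle : (A : F) ≤ Av := my_le_vv hA0
  have hBle : (B : F) ≤ Bv := my_le_vv hB0
  have hAvi : Av⁻¹ = (A : F)⁻¹ := by rw [hAvdef]; exact my_inv_vv hA0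
  have hBvi : Bv⁻¹ = (B : F)⁻¹ := by rw [hBvdef]; exact my_inv_vv hB0
  -- Step A : Av * Bv ≤ Iv
  have hABcoe : (A : F) * B ≤ I := by
    have := (coeIdeal_le_coeIdeal (FractionRing R)).mpr hAB
    rwa [coeIdeal_mul] at this
  have hABle : (A : F) * B ≤ Iv := hABcoe.trans hIle
  have s1 : (Iv⁻¹ * (A : F)) * B ≤ 1 := by
    calc (Iv⁻¹ * (A : F)) * B = Iv⁻¹ * ((A : F) * B) := by ring
    _ ≤ Iv⁻¹ * Iv := mul_right_mono hABle
    _ = 1 := by rw [mul_comm]; exact my_unit_mul_inv uI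
  have s2 : Iv⁻¹ * (A : F) ≤ Bv⁻¹ := by
    rw [hBvi, inv_eq (I := (B : F))]
    exact (le_div_iff_mul_le hB0).mpr s1
  have s3 : Iv⁻¹ * ((A : F) * Bv) ≤ 1 := by
    calc Iv⁻¹ * ((A : F) * Bv) = (Iv⁻¹ * (A : F)) * Bv := by ring
    _ ≤ Bv⁻¹ * Bv := mul_left_mono s2
    _ = 1 := by rw [mul_comm]; exact my_unit_mul_inv uB
  have s4 : Iv⁻¹ * Bv ≤ Av⁻¹ := by
    rw [hAvi, inv_eq (I := (A : F))]
    apply (le_div_iff_mul_le hA0).mpr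
    calc (Iv⁻¹ * Bv) * (A : F) = Iv⁻¹ * ((A : F) * Bv) := by ring
    _ ≤ 1 := s3
  have key : Av * Bv ≤ Iv := by
    have : Av * Bv ≤ Iv * 1 := (my_le_unit_mul_iff uI).mpr (by
      calc Iv⁻¹ * (Av * Bv) = (Iv⁻¹ * Bv) * Av := by ring
      _ ≤ Av⁻¹ * Av := mul_left_mono s4
      _ = 1 := by rw [mul_comm]; exact my_unit_mul_inv uA)
    simpa using this
  -- Step B : factor Iv = C * C2 with Av ≤ C, Bv ≤ C2, C, C2 units and ≤ 1
  have uBi : IsUnit Bv⁻¹ := my_unit_inv_unit uB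
  set C : F := Iv * Bv⁻¹ ⊓ 1 with hCdef
  have hAvC : Av ≤ C := by
    refine le_inf ?_ hAvle1
    rw [mul_comm]
    apply (my_le_unit_mul_iff uBi).mpr
    rw [my_unit_vv uB]
    calc Bv * Av = Av * Bv := mul_comm _ _
    _ ≤ Iv := key
  have hC0 : C ≠ 0 := fun hz =>
    hA0 (le_antisymm (le_trans hAle (le_trans hAvC (le_of_eq hz))) (zero_le _))
  have hCdiv : (C⁻¹)⁻¹ = C := by
    apply le_antisymm
    · refine le_inf ?_ ?_
      · calc (C⁻¹)⁻¹ ≤ ((Iv * Bv⁻¹)⁻¹)⁻¹ := my_vv_mono hC0 inf_le_left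
        _ = Iv * Bv⁻¹ := my_unit_vv (uI.mul uBi)
      · exact le_of_le_of_eq (my_vv_mono hC0 inf_le_right) hone
    · exact my_le_vv hC0
  obtain ⟨C0, hC0eq⟩ := le_one_iff_exists_coeIdeal.mp (inf_le_right (a := Iv * Bv⁻¹))
  have hC0bot : C0 ≠ ⊥ := fun hbot => hC0 (by rw [hCdef, ← hC0eq, hbot, coeIdeal_bot])
  have uC : IsUnit C := by
    have := hPD C0 hC0bot
    rwa [hC0eq, ← hCdef, hCdiv] at this
  have uCi : IsUnit C⁻¹ := my_unit_inv_unit uC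
  set C2 : F := Iv * C⁻¹ with hC2def
  have uC2 : IsUnit C2 := uI.mul uCi
  have hIvC : Iv ≤ C := by
    refine le_inf ?_ hIvle1
    rw [mul_comm]
    apply (my_le_unit_mul_iff uBi).mpr
    rw [my_unit_vv uB]
    calc Bv * Iv ≤ 1 * Iv := mul_left_mono hBvle1
    _ = Iv := one_mul _
  have hC2le1 : C2 ≤ 1 := by
    calc C2 = Iv * C⁻¹ := hC2def
    _ ≤ C * C⁻¹ := mul_left_mono hIvC
    _ ≤ 1 := my_mul_inv_le_one (my_unit_ne_zero uC)
  have hBvC2 : Bv ≤ C2 := by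
    rw [hC2def, mul_comm]
    apply (my_le_unit_mul_iff uCi).mpr
    rw [my_unit_vv uC]
    calc C * Bv ≤ (Iv * Bv⁻¹) * Bv := mul_left_mono inf_le_left
    _ = Iv * (Bv * Bv⁻¹) := by ring
    _ = Iv * 1 := by rw [my_unit_mul_inv uB]
    _ = Iv := mul_one _
  have hCC2 : C * C2 = Iv := by
    calc C * C2 = Iv * (C * C⁻¹) := by rw [hC2def]; ring
    _ = Iv * 1 := by rw [my_unit_mul_inv uC]
    _ = Iv := mul_one _
  have hinvprod : C⁻¹ * C2⁻¹ = Iv⁻¹ := by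
    have h1 : (C * C2) * (C⁻¹ * C2⁻¹) = 1 := by
      calc (C * C2) * (C⁻¹ * C2⁻¹) = (C * C⁻¹) * (C2 * C2⁻¹) := by ring
      _ = 1 := by rw [my_unit_mul_inv uC, my_unit_mul_inv uC2, one_mul]
    have h2 := right_inverse_eq _ _ _ h1
    rwa [hCC2] at h2
  -- Step C : J := I * Iv⁻¹ has J_v = 1
  have hIJf : (I : F) = ((I : F) * Iv⁻¹) * Iv := by
    calc (I : F) = (I : F) * (Iv * Iv⁻¹) := by rw [my_unit_mul_inv uI, mul_one]
    _ = ((I : F) * Iv⁻¹) * Iv := by ring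
  have hJfle1 : (I : F) * Iv⁻¹ ≤ 1 := by
    calc (I : F) * Iv⁻¹ ≤ Iv * Iv⁻¹ := mul_left_mono hIle
    _ = 1 := my_unit_mul_inv uI
  obtain ⟨J0, hJ0⟩ := le_one_iff_exists_coeIdeal.mp hJfle1
  have hJf0 : (I : F) * Iv⁻¹ ≠ 0 := my_mul_unit_ne_zero hI0 (my_unit_inv_unit uI)
  have hJ0bot : J0 ≠ ⊥ := fun hbot => hJf0 (by rw [← hJ0, hbot, coeIdeal_bot])
  have hJv1 : (((J0 : F))⁻¹)⁻¹ = 1 := by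
    rw [hJ0, my_vv_mul_unit hI0 (my_unit_inv_unit uI), ← hIvdef]
    exact my_unit_mul_inv uI
  -- Step D : apply the hypothesis and reassemble
  have hAqle1 : (A : F) * C⁻¹ ≤ 1 := by
    calc (A : F) * C⁻¹ ≤ C * C⁻¹ := mul_left_mono (hAle.trans hAvC)
    _ ≤ 1 := my_mul_inv_le_one (my_unit_ne_zero uC)
  have hBqle1 : (B : F) * C2⁻¹ ≤ 1 := by
    calc (B : F) * C2⁻¹ ≤ C2 * C2⁻¹ := mul_left_mono (hBle.trans hBvC2)
    _ ≤ 1 := my_mul_inv_le_one (my_unit_ne_zero uC2)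
  obtain ⟨A1, hA1⟩ := le_one_iff_exists_coeIdeal.mp hAqle1
  obtain ⟨B1, hB1⟩ := le_one_iff_exists_coeIdeal.mp hBqle1
  have hA1bot : A1 ≠ ⊥ := fun hbot =>
    my_mul_unit_ne_zero hA0 uCi (by rw [← hA1, hbot, coeIdeal_bot])
  have hB1bot : B1 ≠ ⊥ := fun hbot =>
    my_mul_unit_ne_zero hB0 (my_unit_inv_unit uC2) (by rw [← hB1, hbot, coeIdeal_bot])
  have hA1B1 : A1 * B1 ≤ J0 := by
    rw [← coeIdeal_le_coeIdeal (FractionRing R), coeIdeal_mul, hA1, hB1, hJ0]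
    calc ((A : F) * C⁻¹) * ((B : F) * C2⁻¹) = ((A : F) * B) * (C⁻¹ * C2⁻¹) := by ring
    _ = ((A : F) * B) * Iv⁻¹ := by rw [hinvprod]
    _ ≤ (I : F) * Iv⁻¹ := mul_left_mono hABcoe
  obtain ⟨A2, B2, hA12, hB12, hJ0eq⟩ := h J0 A1 B1 hJ0bot hA1bot hB1bot hA1B1 hJv1
  have hA'le1 : (A2 : F) * C ≤ 1 := by
    calc (A2 : F) * C ≤ 1 * C := mul_left_mono coeIdeal_le_one
    _ = C := one_mul _
    _ ≤ 1 := inf_le_right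
  have hB'le1 : (B2 : F) * C2 ≤ 1 := by
    calc (B2 : F) * C2 ≤ 1 * C2 := mul_left_mono coeIdeal_le_one
    _ = C2 := one_mul _
    _ ≤ 1 := hC2le1
  obtain ⟨A', hA'⟩ := le_one_iff_exists_coeIdeal.mp hA'le1
  obtain ⟨B', hB'⟩ := le_one_iff_exists_coeIdeal.mp hB'le1
  refine ⟨A', B', ?_, ?_, ?_⟩
  · rw [← coeIdeal_le_coeIdeal (FractionRing R), hA']
    calc (A : F) = ((A : F) * C⁻¹) * C := by
          rw [mul_assoc, mul_comm C⁻¹ C, my_unit_mul_inv uC, mul_one]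
    _ = (A1 : F) * C := by rw [hA1]
    _ ≤ (A2 : F) * C := mul_left_mono ((coeIdeal_le_coeIdeal _).mpr hA12)
  · rw [← coeIdeal_le_coeIdeal (FractionRing R), hB']
    calc (B : F) = ((B : F) * C2⁻¹) * C2 := by
          rw [mul_assoc, mul_comm C2⁻¹ C2, my_unit_mul_inv uC2, mul_one]
    _ = (B1 : F) * C2 := by rw [hB1]
    _ ≤ (B2 : F) * C2 := mul_left_mono ((coeIdeal_le_coeIdeal _).mpr hB12)
  · rw [← coeIdeal_inj (K := FractionRing R), coeIdeal_mul, hA', hB']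
    calc (I : F) = ((I : F) * Iv⁻¹) * Iv := hIJf
    _ = (J0 : F) * Iv := by rw [hJ0]
    _ = ((A2 * B2 : Ideal R) : F) * Iv := by rw [hJ0eq]
    _ = ((A2 : F) * (B2 : F)) * (C * C2) := by rw [coeIdeal_mul, hCC2]
    _ = ((A2 : F) * C) * ((B2 : F) * C2) := by ring

end Main

theorem pseudoDedekind_sharp_iff (R : Type*) [CommRing R] [IsDomain R]
    (hPD : IsPseudoDedekind R) :
    IsSharpDomain R ↔
      ∀ I A B : Ideal R, I ≠ ⊥ → A ≠ ⊥ → B ≠ ⊥ → A * B ≤ I →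
        ((I : FractionalIdeal (nonZeroDivisors R) (FractionRing R))⁻¹)⁻¹ = 1 →
        ∃ A' B' : Ideal R, A ≤ A' ∧ B ≤ B' ∧ I = A' * B' :=
  pseudoDedekind_sharp_iff' hPD
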